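/- arXiv:1808.03339 — 8 statements merged into one kernel-verified Lean document; each statement's English description precedes it below -/
import Mathlib

section
/- Let C_{φ,w} be a bounded weighted composition operator on ℓ²(X). Then for every x ∈ X the family (|w(y)|²)_{y ∈ φ^{-1}(x)} is summable and C_{φ,w}* C_{φ,w} e_x = ( Σ_{y ∈ φ^{-1}(x)} |w(y)|² ) · e_x. -/
open ContinuousLinearMap

/-- Let `C_{φ,w}` be a bounded weighted composition operator on `ℓ²(X)`.
Then for every `x ∈ X` the family `(|w y|²)_{y ∈ φ⁻¹(x)}` is summable and
`C* C e_x = (Σ_{y ∈ φ⁻¹(x)} |w y|²) • e_x`. -/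
theorem adjoint_comp_weighted_composition_apply_single
    {X : Type*} [Countable X] [DecidableEq X] (φ : X → X) (w : X → ℂ)
    (C : lp (fun _ : X => ℂ) 2 →L[ℂ] lp (fun _ : X => ℂ) 2)
    (hC : ∀ (f : lp (fun _ : X => ℂ) 2) (y : X), C f y = w y * f (φ y))
    (x : X) :
    Summable (fun y : {y : X // φ y = x} => ‖w (y : X)‖ ^ 2) ∧
    (ContinuousLinearMap.adjoint C) (C (lp.single 2 x (1 : ℂ))) =
      ((∑' y : {y : X // φ y = x}, ‖w (y : X)‖ ^ 2 : ℝ) : ℂ) • lp.single 2 x (1 : ℂ) := by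
  classical
  set g : lp (fun _ : X => ℂ) 2 := C (lp.single 2 x (1 : ℂ)) with hg
  -- pointwise formula for `g`
  have hgy : ∀ y : X, g y = if φ y = x then w y else 0 := by
    intro y
    rw [hg, hC]
    by_cases h : φ y = x
    · simp [h, lp.single_apply_self]
    · simp [h, lp.single_apply_ne 2 x _ h]
  -- summability over `X` of `‖g y‖ ^ 2`
  have hs2 : Summable fun y : X => ‖g y‖ ^ 2 := by
    have h2 := lp.memℓp g
    rw [memℓp_gen_iff (by norm_num : 0 < ENNReal.toReal 2)] at h2
    refine h2.congr fun y => ?_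
    rw [ENNReal.toReal_ofNat, ← Real.rpow_natCast ‖g y‖ 2]
    norm_num
  have hsub : Summable (fun y : {y : X // φ y = x} => ‖w (y : X)‖ ^ 2) := by
    have := hs2.subtype {y : X | φ y = x}
    refine this.congr fun y => ?_
    simp only [Function.comp, hgy y.1, if_pos (show φ y.1 = x from y.2)]
  refine ⟨hsub, ?_⟩
  -- total sum over X equals the sum over the fiber
  have htsum : (∑' y : {y : X // φ y = x}, ‖w (y : X)‖ ^ 2 : ℝ)
      = ∑' y : X, ‖g y‖ ^ 2 := by
    rw [← tsum_subtype_eq_of_support_subset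
      (s := {y : X | φ y = x}) (f := fun y => ‖g y‖ ^ 2)]
    · exact tsum_congr fun y => by simp [hgy y.1, y.2]
    · intro y hy
      by_contra h
      simp [Function.mem_support, hgy y] at hy
      exact h hy.1
  apply lp.ext
  funext z
  have hcoe : ∀ (f : lp (fun _ : X => ℂ) 2) (z : X),
      f z = @inner ℂ _ _ (lp.single 2 z (1 : ℂ)) f := by
    intro f z
    rw [lp.inner_single_left]
    simp
  rw [hcoe (ContinuousLinearMap.adjoint C (C (lp.single 2 x (1 : ℂ)))) z,
    ContinuousLinearMap.adjoint_inner_right]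
  have hCz : ∀ y : X, (C (lp.single 2 z (1 : ℂ))) y = if φ y = z then w y else 0 := by
    intro y
    rw [hC]
    by_cases h : φ y = z
    · simp [h, lp.single_apply_self]
    · simp [h, lp.single_apply_ne 2 z _ h]
  rw [lp.inner_eq_tsum]
  have hsmul : ((((((∑' y : {y : X // φ y = x}, ‖w (y : X)‖ ^ 2 : ℝ)) : ℂ) •
      lp.single 2 x (1 : ℂ) : lp (fun _ : X => ℂ) 2) : ∀ _ : X, ℂ)) z
      = (((∑' y : {y : X // φ y = x}, ‖w (y : X)‖ ^ 2 : ℝ)) : ℂ) *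
        (if z = x then 1 else 0) := by
    rw [lp.coeFn_smul, Pi.smul_apply]
    by_cases h : z = x
    · simp [h, lp.single_apply_self]
    · simp [h, lp.single_apply_ne 2 x _ h]
  rw [hsmul]
  by_cases hz : z = x
  · subst hz
    rw [if_pos rfl, mul_one, htsum]
    have : ∀ y : X, (starRingEnd ℂ) ((C (lp.single 2 z (1 : ℂ))) y) * g y
        = ((‖g y‖ ^ 2 : ℝ) : ℂ) := by
      intro y
      rw [hCz y, ← hgy y]
      rw [RCLike.conj_mul]
      norm_cast
    calc (∑' y : X, @inner ℂ _ _ ((C (lp.single 2 z (1 : ℂ))) y) (g y))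
        = ∑' y : X, ((‖g y‖ ^ 2 : ℝ) : ℂ) := tsum_congr fun y => by rw [RCLike.inner_apply']; exact this y
      _ = ((∑' y : X, ‖g y‖ ^ 2 : ℝ) : ℂ) := (Complex.ofReal_tsum _).symm
  · simp only [if_neg hz, mul_zero]
    have : ∀ y : X, @inner ℂ _ _ ((C (lp.single 2 z (1 : ℂ))) y) (g y) = 0 := by
      intro y
      rw [RCLike.inner_apply, hCz y, hgy y]
      by_cases h : φ y = z
      · rw [if_pos h, if_neg (fun hx => hz (h.symm.trans hx))]
        simp
      · simp [h]
    rw [tsum_congr this, tsum_zero]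
end

section
/- Let C_{φ,w} be a bounded weighted composition operator on ℓ²(X) such that C_{φ,w}*C_{φ,w} is invertible in B(ℓ²(X)). Then the Cauchy dual C' := C_{φ,w}(C_{φ,w}*C_{φ,w})^{-1} is again a weighted composition operator: for every f ∈ ℓ²(X) and every y ∈ X, (C' f)(y) = ( w(y) / Σ_{z ∈ φ^{-1}(φ(y))} |w(z)|² ) · f(φ(y)); equivalently, for every x ∈ X, C' e_x = Σ_{y ∈ φ^{-1}(x)} ( w(y) / Σ_{z ∈ φ^{-1}(x)} |w(z)|² ) e_y. -/
open ContinuousLinearMap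

/-- Let `C_{φ,w}` be a bounded weighted composition operator on `ℓ²(X)`
such that `C*C` is invertible (with inverse `B`).  Then the Cauchy dual
`C' := C (C*C)⁻¹ = C * B` is again a weighted composition operator:
`(C' f) y = (w y / Σ_{z ∈ φ⁻¹(φ y)} |w z|²) · f (φ y)` for all `f ∈ ℓ²(X)` and `y ∈ X`. -/
theorem cauchyDual_weighted_composition_apply
    {X : Type*} [Countable X] [DecidableEq X] (φ : X → X) (w : X → ℂ)
    (C B : lp (fun _ : X => ℂ) 2 →L[ℂ] lp (fun _ : X => ℂ) 2)
    (hC : ∀ (f : lp (fun _ : X => ℂ) 2) (y : X), C f y = w y * f (φ y))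
    (hB1 : ContinuousLinearMap.adjoint C * C * B = 1)
    (hB2 : B * (ContinuousLinearMap.adjoint C * C) = 1)
    (f : lp (fun _ : X => ℂ) 2) (y : X) :
    (C * B) f y =
      (w y / ((∑' z : {z : X // φ z = φ y}, ‖w (z : X)‖ ^ 2 : ℝ) : ℂ)) * f (φ y) := by
  set h : X → ℝ := fun x => ∑' z : {z : X // φ z = x}, ‖w (z : X)‖ ^ 2 with hh
  -- coordinate evaluation via inner product
  have coord : ∀ (v : lp (fun _ : X => ℂ) 2) (x : X),
      v x = @inner ℂ _ _ (lp.single 2 x (1:ℂ)) v := by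
    intro v x
    rw [lp.inner_single_left]
    simp [RCLike.inner_apply]
  -- summability of the weight function over fibers
  have key : ∀ (g : lp (fun _ : X => ℂ) 2) (x : X),
      ((ContinuousLinearMap.adjoint C * C) g) x = ((h x : ℝ) : ℂ) * g x := by
    intro g x
    have e1 : ((ContinuousLinearMap.adjoint C * C) g) x
        = @inner ℂ _ _ (C (lp.single 2 x (1:ℂ))) (C g) := by
      rw [ContinuousLinearMap.mul_apply, coord, ContinuousLinearMap.adjoint_inner_right]
    rw [e1, lp.inner_eq_tsum]
    have e2 : (fun y' => @inner ℂ _ _ ((C (lp.single 2 x (1:ℂ))) y') ((C g) y'))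
        = fun y' => (if φ y' = x then ((‖w y'‖ ^ 2 : ℝ) : ℂ) else 0) * g x := by
      funext y'
      rw [RCLike.inner_apply, hC, hC]
      by_cases hyx : φ y' = x
      · have hcm : (starRingEnd ℂ) (w y') * w y' = ((‖w y'‖ ^ 2 : ℝ) : ℂ) := by
          rw [RCLike.conj_mul]; norm_cast
        rw [hyx, lp.single_apply_self, if_pos rfl, mul_one, mul_comm, ← mul_assoc, hcm]
      · rw [lp.single_apply_ne _ _ _ hyx, if_neg hyx]
        simp
    rw [e2, tsum_mul_right]
    congr 1
    rw [hh, Complex.ofReal_tsum]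
    refine Eq.trans ?_ (tsum_subtype {z : X | φ z = x} (fun z => ((‖w z‖ ^ 2 : ℝ) : ℂ))).symm
    exact tsum_congr fun z => by simp [Set.indicator_apply]
  -- h x ≠ 0
  have hne : ∀ x : X, ((h x : ℝ) : ℂ) ≠ 0 := by
    intro x hx0
    have hAe : (ContinuousLinearMap.adjoint C * C) (lp.single 2 x (1:ℂ)) = 0 := by
      apply lp.ext
      funext x'
      rw [key]
      by_cases hx' : x' = x
      · subst hx'; rw [hx0]; simp
      · rw [lp.single_apply, Pi.single_eq_of_ne hx']; simp
    have := congrArg (fun T => T (lp.single 2 x (1:ℂ))) hB2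
    simp only [ContinuousLinearMap.mul_apply, ContinuousLinearMap.one_apply, hAe, map_zero] at this
    have h1 : (lp.single 2 x (1:ℂ) : lp (fun _ : X => ℂ) 2) x = (0 : lp (fun _ : X => ℂ) 2) x := by
      rw [this]
    rw [lp.single_apply_self] at h1
    simp at h1
  -- B f coordinate formula
  have hBf : ∀ x : X, (B f) x = f x / ((h x : ℝ) : ℂ) := by
    intro x
    have := congrArg (fun T => T f) hB1
    simp only [ContinuousLinearMap.mul_apply, ContinuousLinearMap.one_apply] at this
    have h2 : ((ContinuousLinearMap.adjoint C * C) (B f)) x = f x := by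
      rw [show (ContinuousLinearMap.adjoint C * C) (B f) = f from this]
    rw [key] at h2
    field_simp [hne x] at h2 ⊢
    linear_combination h2
  rw [ContinuousLinearMap.mul_apply, hC, hBf]
  ring
end

section
/- Suppose T is a left-invertible bounded operator on a complex Hilbert space H with Cauchy dual T', and E is a closed subspace of H satisfying condition (LI). If x ∈ H satisfies P_E(T^n x) = 0 and P_E((T'*)^n x) = 0 for every n ∈ ℕ, then x = 0. (Equivalently, the map U sending x to the formal Laurent series Σ_{n≥1}(P_E T^n x) z^{-n} + Σ_{n≥0}(P_E (T'*)^n x) z^n is injective.) -/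
open ContinuousLinearMap
open scoped ComplexInnerProductSpace

/-- Let `T` be a left-invertible bounded operator on a complex Hilbert
space `H` (i.e. `T*T` is invertible, with inverse `B`), with Cauchy dual `T' = T * B`,
and let `E` be a closed subspace of `H` satisfying condition (LI): the closed linear span
of `{T*^n e : e ∈ E, n ∈ ℕ} ∪ {T'^n e : e ∈ E, n ∈ ℕ}` is all of `H`.
If `x ∈ H` satisfies `P_E (T^n x) = 0` and `P_E ((T'*)^n x) = 0` for every `n`, then `x = 0`. -/
theorem analytic_model_injective
    {H : Type*} [NormedAddCommGroup H] [InnerProductSpace ℂ H] [CompleteSpace H]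
    (T B : H →L[ℂ] H)
    (hB1 : ContinuousLinearMap.adjoint T * T * B = 1)
    (hB2 : B * (ContinuousLinearMap.adjoint T * T) = 1)
    (E : Submodule ℂ H) (hEclosed : IsClosed (E : Set H)) [E.HasOrthogonalProjection]
    (hLI : (Submodule.span ℂ {y : H | ∃ e ∈ E, ∃ n : ℕ,
        y = (ContinuousLinearMap.adjoint T ^ n) e ∨ y = ((T * B) ^ n) e}).topologicalClosure = ⊤)
    (x : H)
    (h1 : ∀ n : ℕ, E.orthogonalProjectionOnto ((T ^ n) x) = 0)
    (h2 : ∀ n : ℕ, E.orthogonalProjectionOnto ((ContinuousLinearMap.adjoint (T * B) ^ n) x) = 0) :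
    x = 0 := by
  set S : Set H := {y : H | ∃ e ∈ E, ∃ n : ℕ,
      y = (ContinuousLinearMap.adjoint T ^ n) e ∨ y = ((T * B) ^ n) e}
  set K : Submodule ℂ H := Submodule.span ℂ S
  have hx : x ∈ Kᗮ := by
    rw [Submodule.mem_orthogonal]
    intro u hu
    induction hu using Submodule.span_induction with
    | mem y hy =>
      obtain ⟨e, he, n, hy | hy⟩ := hy
      · have hmem : (T ^ n) x ∈ Eᗮ := Submodule.orthogonalProjectionOnto_eq_zero_iff.mp (h1 n)
        have hadj : (ContinuousLinearMap.adjoint T ^ n)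
            = ContinuousLinearMap.adjoint (T ^ n) := by
          rw [← ContinuousLinearMap.star_eq_adjoint, ← ContinuousLinearMap.star_eq_adjoint,
            star_pow]
        rw [hy, hadj, ContinuousLinearMap.adjoint_inner_left]
        exact hmem e he
      · have hmem : (ContinuousLinearMap.adjoint (T * B) ^ n) x ∈ Eᗮ :=
          Submodule.orthogonalProjectionOnto_eq_zero_iff.mp (h2 n)
        have hadj : ((T * B) ^ n)
            = ContinuousLinearMap.adjoint (ContinuousLinearMap.adjoint (T * B) ^ n) := by
          simp [← ContinuousLinearMap.star_eq_adjoint, star_pow]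
        rw [hy, hadj, ContinuousLinearMap.adjoint_inner_left]
        exact hmem e he
    | zero => simp
    | add y z _ _ hy hz => rw [inner_add_left, hy, hz, add_zero]
    | smul a y _ hy => rw [inner_smul_left, hy, mul_zero]
  have hK : Kᗮ = ⊥ := by
    exact Submodule.topologicalClosure_eq_top_iff.mp hLI
  rw [hK, Submodule.mem_bot] at hx
  exact hx
end

section
/- Suppose T is a left-invertible bounded operator on a complex Hilbert space H with Cauchy dual T', and E is a closed subspace of H satisfying condition (LI). Then for every n ∈ ℕ, the closed linear span of {T*^m (T'^n e) : e ∈ E, m ∈ ℕ} ∪ {T'^m (T'^n e) : e ∈ E, m ∈ ℕ} equals H; that is, [T'^n E]_{T,T'} = H. -/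
open ContinuousLinearMap

/-- Let `T` be a left-invertible bounded operator on a complex Hilbert
space `H` (i.e. `T*T` invertible, with inverse `B`), with Cauchy dual `T' = T * B`, and
let `E` be a closed subspace of `H` satisfying condition (LI).  Then for every `n ∈ ℕ`,
the closed linear span of `{T*^m (T'^n e)} ∪ {T'^m (T'^n e)}` (over `e ∈ E`, `m ∈ ℕ`)
equals `H`, i.e. `[T'^n E]_{T,T'} = H`. -/
theorem span_cauchyDual_pow_image
    {H : Type*} [NormedAddCommGroup H] [InnerProductSpace ℂ H] [CompleteSpace H]
    (T B : H →L[ℂ] H)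
    (hB1 : ContinuousLinearMap.adjoint T * T * B = 1)
    (hB2 : B * (ContinuousLinearMap.adjoint T * T) = 1)
    (E : Submodule ℂ H) (hEclosed : IsClosed (E : Set H))
    (hLI : (Submodule.span ℂ {y : H | ∃ e ∈ E, ∃ m : ℕ,
        y = (ContinuousLinearMap.adjoint T ^ m) e ∨ y = ((T * B) ^ m) e}).topologicalClosure = ⊤)
    (n : ℕ) :
    (Submodule.span ℂ {y : H | ∃ e ∈ E, ∃ m : ℕ,
        y = (ContinuousLinearMap.adjoint T ^ m) (((T * B) ^ n) e) ∨
        y = ((T * B) ^ m) (((T * B) ^ n) e)}).topologicalClosure = ⊤ := by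
  have hAC : ContinuousLinearMap.adjoint T * (T * B) = 1 := by
    rw [← mul_assoc]; exact hB1
  have hk : ∀ k : ℕ, ContinuousLinearMap.adjoint T ^ k * (T * B) ^ k = 1 := by
    intro k
    induction k with
    | zero => simp
    | succ k ih =>
        rw [pow_succ, pow_succ', mul_assoc, ← mul_assoc (ContinuousLinearMap.adjoint T),
          hAC, one_mul, ih]
  have hge : ∀ m k : ℕ, ContinuousLinearMap.adjoint T ^ (m + k) * (T * B) ^ k
      = ContinuousLinearMap.adjoint T ^ m := by
    intro m k; rw [pow_add, mul_assoc, hk, mul_one]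
  have hle : ∀ m k : ℕ, ContinuousLinearMap.adjoint T ^ k * (T * B) ^ (k + m)
      = (T * B) ^ m := by
    intro m k; rw [pow_add, ← mul_assoc, hk, one_mul]
  refine top_unique ?_
  rw [← hLI]
  refine Submodule.topologicalClosure_mono (Submodule.span_mono ?_)
  rintro y ⟨e, he, m, h | h⟩
  · refine ⟨e, he, m + n, Or.inl ?_⟩
    rw [h, ← hge m n, ContinuousLinearMap.mul_apply]
  · rcases le_or_gt n m with hnm | hmn
    · refine ⟨e, he, m - n, Or.inr ?_⟩
      rw [h, ← ContinuousLinearMap.mul_apply, ← pow_add, Nat.sub_add_cancel hnm]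
    · refine ⟨e, he, n - m, Or.inl ?_⟩
      have h1 : n - m + m = n := Nat.sub_add_cancel hmn.le
      rw [h, ← hle m (n - m), h1, ContinuousLinearMap.mul_apply]
end

section
/- Let T be a left-invertible bounded operator on a complex Hilbert space H with Cauchy dual T', and let E be a closed subspace of H satisfying condition (prep): E ⊥ T^n E and E ⊥ T'^n E for every n ≥ 1. Then for all e₀, e₁ ∈ E and all n, m ∈ ℕ: ⟨T^n e₀, T'^m e₁⟩ = ⟨e₀, e₁⟩ if n = m, and ⟨T^n e₀, T'^m e₁⟩ = 0 if n ≠ m. -/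
open ContinuousLinearMap
open scoped ComplexInnerProductSpace

/-- Let `T` be a left-invertible bounded operator on a complex Hilbert
space `H` (i.e. `T*T` invertible, with inverse `B`), with Cauchy dual `T' = T * B`, and
let `E` be a closed subspace of `H` satisfying condition (prep): `E ⊥ T^n E` and
`E ⊥ T'^n E` for every `n ≥ 1`.  Then for all `e₀, e₁ ∈ E` and `n, m ∈ ℕ`,
`⟨T^n e₀, T'^m e₁⟩ = ⟨e₀, e₁⟩` if `n = m` and `⟨T^n e₀, T'^m e₁⟩ = 0` otherwise. -/
theorem inner_pow_cauchyDual_pow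
    {H : Type*} [NormedAddCommGroup H] [InnerProductSpace ℂ H] [CompleteSpace H]
    (T B : H →L[ℂ] H)
    (hB1 : ContinuousLinearMap.adjoint T * T * B = 1)
    (hB2 : B * (ContinuousLinearMap.adjoint T * T) = 1)
    (E : Submodule ℂ H) (hEclosed : IsClosed (E : Set H))
    (hprep : ∀ e ∈ E, ∀ f ∈ E, ∀ n : ℕ, 1 ≤ n →
      ⟪e, (T ^ n) f⟫ = 0 ∧ ⟪e, ((T * B) ^ n) f⟫ = 0)
    (e₀ e₁ : H) (he₀ : e₀ ∈ E) (he₁ : e₁ ∈ E) (n m : ℕ) :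
    ⟪(T ^ n) e₀, ((T * B) ^ m) e₁⟫ = if n = m then ⟪e₀, e₁⟫ else 0 := by
  have key : ContinuousLinearMap.adjoint T * (T * B) = 1 := by
    rw [← mul_assoc]; exact hB1
  have hstep : ∀ (x y : H) (a b : ℕ),
      ⟪(T ^ (a+1)) x, ((T * B) ^ (b+1)) y⟫ = ⟪(T ^ a) x, ((T * B) ^ b) y⟫ := by
    intro x y a b
    have h1 : (T ^ (a+1)) x = T ((T ^ a) x) := by rw [pow_succ', ContinuousLinearMap.mul_apply]
    have h2 : ((T * B) ^ (b+1)) y = (T * B) (((T * B) ^ b) y) := by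
      rw [pow_succ', ContinuousLinearMap.mul_apply]
    have h3 : (ContinuousLinearMap.adjoint T) ((T * B) (((T * B) ^ b) y))
        = ((T * B) ^ b) y := by
      have := congrFun (congrArg DFunLike.coe key) (((T * B) ^ b) y)
      simpa [mul_apply] using this
    rw [h1, h2, ← adjoint_inner_right, h3]
  induction n generalizing m with
  | zero =>
    cases m with
    | zero => simp
    | succ k =>
      have := (hprep e₀ he₀ e₁ he₁ (k+1) (by omega)).2
      simpa using this
  | succ a ih =>
    cases m with
    | zero =>
      have := (hprep e₁ he₁ e₀ he₀ (a+1) (by omega)).1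
      have h0 : ⟪(T ^ (a+1)) e₀, e₁⟫ = 0 := by
        rw [← inner_conj_symm, this]; simp
      simpa using h0
    | succ b =>
      rw [hstep e₀ e₁ a b, ih b]
      simp [Nat.succ_inj]
end

section
/- Suppose T is a left-invertible bounded operator on a complex Hilbert space H with Cauchy dual T', and E is a closed subspace of H satisfying condition (LI). Set r⁺ := liminf_{n→∞} ‖P_E ∘ (T'*)^n‖^{-1/n} and r⁻ := limsup_{n→∞} ‖P_E ∘ T^n‖^{1/n}, and assume r⁺ > r⁻. Then for every x ∈ H and every z ∈ ℂ with r⁻ < |z| < r⁺, the series Σ_{n≥1} (P_E T^n x) z^{-n} and Σ_{n≥0} (P_E (T'*)^n x) z^n converge absolutely in H, and the function U_x(z) := Σ_{n≥1}(P_E T^n x) z^{-n} + Σ_{n≥0}(P_E (T'*)^n x) z^n is analytic (complex differentiable) on the open annulus {z ∈ ℂ : r⁻ < |z| < r⁺}. -/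
open ContinuousLinearMap Filter

private lemma aux_rpow_le {a ρ : ℝ} {n : ℕ} (hn : n ≠ 0) (ha : 0 ≤ a) (hρ : 0 ≤ ρ)
    (h : a ^ ((1 : ℝ) / n) ≤ ρ) : a ≤ ρ ^ n := by
  have h1 : (a ^ ((1 : ℝ) / n)) ^ n ≤ ρ ^ n := pow_le_pow_left₀ (Real.rpow_nonneg ha _) h n
  rwa [← Real.rpow_natCast (a ^ ((1 : ℝ) / n)) n, ← Real.rpow_mul ha, one_div,
    inv_mul_cancel₀ (by exact_mod_cast hn : (n : ℝ) ≠ 0), Real.rpow_one] at h1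

private lemma aux_rpow_neg {a σ : ℝ} {n : ℕ} (hn : n ≠ 0) (ha : 0 ≤ a) (hσ : 0 < σ)
    (h : σ ≤ a ^ (-(1 : ℝ) / n)) : a * σ ^ n ≤ 1 := by
  rcases eq_or_lt_of_le ha with h0 | h0
  · rw [← h0, zero_mul]; exact zero_le_one
  · have h1 : σ ^ n ≤ (a ^ (-(1 : ℝ) / n)) ^ n := pow_le_pow_left₀ hσ.le h n
    rw [← Real.rpow_natCast (a ^ (-(1 : ℝ) / n)) n, ← Real.rpow_mul ha] at h1
    have hmul : -(1 : ℝ) / n * n = -1 := by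
      field_simp
    rw [hmul, Real.rpow_neg_one] at h1
    calc a * σ ^ n ≤ a * a⁻¹ := mul_le_mul_of_nonneg_left h1 ha
      _ = 1 := mul_inv_cancel₀ h0.ne'

private lemma aux_limsup_nonneg {v : ℕ → ℝ} (hv : ∀ n, 0 ≤ v n) {C : ℝ} (hC : 1 ≤ C)
    (hvC : ∀ n, v n ≤ C ^ n) :
    0 ≤ limsup (fun n : ℕ => v n ^ ((1 : ℝ) / n)) atTop ∧
      IsBoundedUnder (· ≤ ·) atTop (fun n : ℕ => v n ^ ((1 : ℝ) / n)) := by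
  have hC0 : (0 : ℝ) ≤ C := zero_le_one.trans hC
  have hb : ∀ n : ℕ, v n ^ ((1 : ℝ) / n) ≤ C := by
    intro n
    rcases Nat.eq_zero_or_pos n with rfl | hn
    · simp only [Nat.cast_zero, div_zero, Real.rpow_zero]
      exact hC
    · calc v n ^ ((1 : ℝ) / n) ≤ (C ^ n) ^ ((1 : ℝ) / n) :=
            Real.rpow_le_rpow (hv n) (hvC n) (by positivity)
        _ = C := by
            rw [← Real.rpow_natCast C n, ← Real.rpow_mul hC0, mul_one_div,
              div_self (by exact_mod_cast hn.ne' : (n : ℝ) ≠ 0), Real.rpow_one]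
  have hbd : IsBoundedUnder (· ≤ ·) atTop (fun n : ℕ => v n ^ ((1 : ℝ) / n)) :=
    isBoundedUnder_of ⟨C, hb⟩
  refine ⟨le_limsup_of_frequently_le ?_ hbd, hbd⟩
  exact Frequently.of_forall fun n => Real.rpow_nonneg (hv n) _

private lemma aux_ev_le {v : ℕ → ℝ} (hv : ∀ n, 0 ≤ v n) {C : ℝ} (hC : 1 ≤ C)
    (hvC : ∀ n, v n ≤ C ^ n) {ρ : ℝ} (hρ0 : 0 ≤ ρ)
    (hρ : limsup (fun n : ℕ => v n ^ ((1 : ℝ) / n)) atTop < ρ) :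
    ∀ᶠ n : ℕ in atTop, v n ≤ ρ ^ n := by
  have hbd := (aux_limsup_nonneg hv hC hvC).2
  filter_upwards [eventually_lt_of_limsup_lt hρ hbd, eventually_ge_atTop 1] with n h1 h2
  exact aux_rpow_le (Nat.one_le_iff_ne_zero.mp h2) (hv n) hρ0 h1.le

private lemma aux_ev_liminf {w : ℕ → ℝ} (hw : ∀ n, 0 ≤ w n) {σ : ℝ} (hσ : 0 < σ)
    (h : σ < liminf (fun n : ℕ => w n ^ (-(1 : ℝ) / n)) atTop) :
    ∀ᶠ n : ℕ in atTop, w n * σ ^ n ≤ 1 := by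
  have hbd : IsBoundedUnder (· ≥ ·) atTop (fun n : ℕ => w n ^ (-(1 : ℝ) / n)) :=
    isBoundedUnder_of ⟨0, fun n => Real.rpow_nonneg (hw n) _⟩
  filter_upwards [eventually_lt_of_lt_liminf h hbd, eventually_ge_atTop 1] with n h1 h2
  exact aux_rpow_neg (Nat.one_le_iff_ne_zero.mp h2) (hw n) hσ h1.le

private lemma aux_summable {c : ℕ → ℝ} {M q : ℝ} (hq0 : 0 ≤ q) (hq1 : q < 1)
    (hc : ∀ᶠ n in atTop, |c n| ≤ M * q ^ n) : Summable c := by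
  apply summable_of_isBigO_nat (summable_geometric_of_lt_one hq0 hq1)
  rw [Asymptotics.isBigO_iff]
  refine ⟨M, ?_⟩
  filter_upwards [hc] with n hn
  simpa [abs_of_nonneg (pow_nonneg hq0 n), abs_of_nonneg hq0] using hn

/-- Let `T` be a left-invertible bounded operator on a complex Hilbert
space `H` (i.e. `T*T` invertible, with inverse `B`), with Cauchy dual `T' = T * B`, and
let `E` be a closed subspace of `H` satisfying condition (LI).  Set
`r⁺ = liminf ‖P_E (T'*)^n‖^{-1/n}` and `r⁻ = limsup ‖P_E T^n‖^{1/n}`, and assume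
`r⁻ < r⁺`.  Then for every `x ∈ H` and `z` with `r⁻ < |z| < r⁺` the two series of the
model converge absolutely, and `z ↦ U_x(z)` is analytic on the open annulus. -/
theorem analytic_model_convergence_on_annulus
    {H : Type*} [NormedAddCommGroup H] [InnerProductSpace ℂ H] [CompleteSpace H]
    (T B : H →L[ℂ] H)
    (hB1 : ContinuousLinearMap.adjoint T * T * B = 1)
    (hB2 : B * (ContinuousLinearMap.adjoint T * T) = 1)
    (E : Submodule ℂ H) (hEclosed : IsClosed (E : Set H)) [E.HasOrthogonalProjection]
    (hLI : (Submodule.span ℂ {y : H | ∃ e ∈ E, ∃ n : ℕ,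
        y = (ContinuousLinearMap.adjoint T ^ n) e ∨ y = ((T * B) ^ n) e}).topologicalClosure = ⊤)
    (rp rm : ℝ)
    (hrp : rp = liminf (fun n : ℕ =>
      ‖(E.subtypeL ∘L E.orthogonalProjectionOnto) ∘L (ContinuousLinearMap.adjoint (T * B) ^ n)‖
        ^ (-(1 : ℝ) / n)) atTop)
    (hrm : rm = limsup (fun n : ℕ =>
      ‖(E.subtypeL ∘L E.orthogonalProjectionOnto) ∘L (T ^ n)‖ ^ ((1 : ℝ) / n)) atTop)
    (h : rm < rp) :
    (∀ (x : H) (z : ℂ), rm < ‖z‖ → ‖z‖ < rp →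
      Summable (fun n : ℕ =>
        ‖(E.orthogonalProjectionOnto ((T ^ (n + 1)) x) : H)‖ * ‖z‖⁻¹ ^ (n + 1)) ∧
      Summable (fun n : ℕ =>
        ‖(E.orthogonalProjectionOnto ((ContinuousLinearMap.adjoint (T * B) ^ n) x) : H)‖ * ‖z‖ ^ n)) ∧
    ∀ x : H, DifferentiableOn ℂ
      (fun z : ℂ =>
        (∑' n : ℕ, (z ^ (n + 1))⁻¹ • (E.orthogonalProjectionOnto ((T ^ (n + 1)) x) : H)) +
        ∑' n : ℕ, z ^ n • (E.orthogonalProjectionOnto ((ContinuousLinearMap.adjoint (T * B) ^ n) x) : H))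
      {z : ℂ | rm < ‖z‖ ∧ ‖z‖ < rp} := by
  classical
  set P : H →L[ℂ] H := E.subtypeL ∘L E.orthogonalProjectionOnto with hPdef
  set A : H →L[ℂ] H := ContinuousLinearMap.adjoint (T * B) with hAdef
  have hP1 : ‖P‖ ≤ 1 := by
    calc ‖P‖ ≤ ‖E.subtypeL‖ * ‖(E.orthogonalProjectionOnto : H →L[ℂ] E)‖ := opNorm_comp_le _ _
      _ ≤ 1 * 1 :=
          mul_le_mul E.norm_subtypeL_le (Submodule.orthogonalProjectionOnto_norm_le (K := E)) (ContinuousLinearMap.opNorm_nonneg _)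
            zero_le_one
      _ = 1 := one_mul 1
  set C : ℝ := max (max ‖T‖ ‖A‖) 1 with hCdef
  have hC1 : 1 ≤ C := le_max_right _ _
  have hpow : ∀ (S : H →L[ℂ] H), ‖S‖ ≤ C → ∀ n : ℕ, ‖P ∘L S ^ n‖ ≤ C ^ n := by
    intro S hS n
    rcases Nat.eq_zero_or_pos n with rfl | hn
    · have hid : P ∘L S ^ 0 = P := by ext v; simp
      rw [hid, pow_zero]
      exact hP1
    calc ‖P ∘L S ^ n‖ ≤ ‖P‖ * ‖S ^ n‖ := opNorm_comp_le _ _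
      _ ≤ 1 * ‖S‖ ^ n :=
          mul_le_mul hP1 (norm_pow_le' S hn) (norm_nonneg _) zero_le_one
      _ = ‖S‖ ^ n := one_mul _
      _ ≤ C ^ n := pow_le_pow_left₀ (norm_nonneg _) hS n
  have hvC : ∀ n : ℕ, ‖P ∘L T ^ n‖ ≤ C ^ n :=
    hpow T ((le_max_left _ _).trans (le_max_left _ _))
  have hwC : ∀ n : ℕ, ‖P ∘L A ^ n‖ ≤ C ^ n :=
    hpow A ((le_max_right _ _).trans (le_max_left _ _))
  have hv0 : ∀ n : ℕ, 0 ≤ ‖P ∘L T ^ n‖ := fun n => norm_nonneg _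
  have hw0 : ∀ n : ℕ, 0 ≤ ‖P ∘L A ^ n‖ := fun n => norm_nonneg _
  have hrm0 : 0 ≤ rm := hrm ▸ (aux_limsup_nonneg hv0 hC1 hvC).1
  -- Part 1 : summability
  have part1 : ∀ (x : H) (z : ℂ), rm < ‖z‖ → ‖z‖ < rp →
      Summable (fun n : ℕ =>
        ‖(E.orthogonalProjectionOnto ((T ^ (n + 1)) x) : H)‖ * ‖z‖⁻¹ ^ (n + 1)) ∧
      Summable (fun n : ℕ =>
        ‖(E.orthogonalProjectionOnto ((A ^ n) x) : H)‖ * ‖z‖ ^ n) := by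
    intro x z hz1 hz2
    have hz0 : 0 < ‖z‖ := lt_of_le_of_lt hrm0 hz1
    constructor
    · -- first series
      set ρ : ℝ := (rm + ‖z‖) / 2 with hρdef
      have hρ1 : rm < ρ := by rw [hρdef]; linarith
      have hρ2 : ρ < ‖z‖ := by rw [hρdef]; linarith
      have hρ0 : 0 ≤ ρ := hrm0.trans hρ1.le
      have hev : ∀ᶠ n : ℕ in atTop, ‖P ∘L T ^ n‖ ≤ ρ ^ n :=
        aux_ev_le hv0 hC1 hvC hρ0 (hrm ▸ hρ1)
      obtain ⟨N, hN⟩ := eventually_atTop.mp hev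
      set q : ℝ := ρ / ‖z‖ with hqdef
      have hq0 : 0 ≤ q := div_nonneg hρ0 hz0.le
      have hq1 : q < 1 := (div_lt_one hz0).mpr hρ2
      refine aux_summable (M := ‖x‖ * q) hq0 hq1 ?_
      rw [eventually_atTop]
      refine ⟨N, fun n hn => ?_⟩
      have hb1 : ‖(E.orthogonalProjectionOnto ((T ^ (n + 1)) x) : H)‖
          ≤ ‖P ∘L T ^ (n + 1)‖ * ‖x‖ := (P ∘L T ^ (n + 1)).le_opNorm x
      have hb2 : ‖P ∘L T ^ (n + 1)‖ ≤ ρ ^ (n + 1) := hN (n + 1) (hn.trans (Nat.le_succ n))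
      have habs : |‖(E.orthogonalProjectionOnto ((T ^ (n + 1)) x) : H)‖ * ‖z‖⁻¹ ^ (n + 1)|
          = ‖(E.orthogonalProjectionOnto ((T ^ (n + 1)) x) : H)‖ * ‖z‖⁻¹ ^ (n + 1) :=
        abs_of_nonneg (by positivity)
      rw [habs]
      calc ‖(E.orthogonalProjectionOnto ((T ^ (n + 1)) x) : H)‖ * ‖z‖⁻¹ ^ (n + 1)
          ≤ (ρ ^ (n + 1) * ‖x‖) * ‖z‖⁻¹ ^ (n + 1) := by
            gcongr
            exact hb1.trans (by gcongr)
        _ = (‖x‖ * q) * q ^ n := by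
            rw [hqdef, div_eq_mul_inv, mul_pow, pow_succ ρ n, pow_succ ‖z‖⁻¹ n]
            ring
    · -- second series
      set σ : ℝ := (‖z‖ + rp) / 2 with hσdef
      have hσ1 : ‖z‖ < σ := by rw [hσdef]; linarith
      have hσ2 : σ < rp := by rw [hσdef]; linarith
      have hσ0 : 0 < σ := hz0.trans hσ1
      have hev : ∀ᶠ n : ℕ in atTop, ‖P ∘L A ^ n‖ * σ ^ n ≤ 1 :=
        aux_ev_liminf hw0 hσ0 (hrp ▸ hσ2)
      set q : ℝ := ‖z‖ / σ with hqdef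
      have hq0 : 0 ≤ q := div_nonneg hz0.le hσ0.le
      have hq1 : q < 1 := (div_lt_one hσ0).mpr hσ1
      refine aux_summable (M := ‖x‖) hq0 hq1 ?_
      filter_upwards [hev] with n hn
      have hb1 : ‖(E.orthogonalProjectionOnto ((A ^ n) x) : H)‖ ≤ ‖P ∘L A ^ n‖ * ‖x‖ :=
        (P ∘L A ^ n).le_opNorm x
      have habs : |‖(E.orthogonalProjectionOnto ((A ^ n) x) : H)‖ * ‖z‖ ^ n|
          = ‖(E.orthogonalProjectionOnto ((A ^ n) x) : H)‖ * ‖z‖ ^ n :=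
        abs_of_nonneg (by positivity)
      rw [habs]
      have hzn : ‖z‖ ^ n = σ ^ n * q ^ n := by
        rw [hqdef, ← mul_pow, mul_div_cancel₀ _ hσ0.ne']
      calc ‖(E.orthogonalProjectionOnto ((A ^ n) x) : H)‖ * ‖z‖ ^ n
          ≤ (‖P ∘L A ^ n‖ * ‖x‖) * (σ ^ n * q ^ n) := by rw [← hzn]; gcongr
        _ = (‖P ∘L A ^ n‖ * σ ^ n) * (‖x‖ * q ^ n) := by ring
        _ ≤ 1 * (‖x‖ * q ^ n) := by
            gcongr
        _ = ‖x‖ * q ^ n := one_mul _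
  refine ⟨part1, ?_⟩
  -- Part 2 : analyticity
  intro x
  set s : Set ℂ := {z : ℂ | rm < ‖z‖ ∧ ‖z‖ < rp} with hsdef
  have hs_open : IsOpen s := by
    have : s = (fun z : ℂ => ‖z‖) ⁻¹' Set.Ioo rm rp := rfl
    rw [this]
    exact isOpen_Ioo.preimage continuous_norm
  set b : ℕ → H := fun n => (E.orthogonalProjectionOnto ((T ^ (n + 1)) x) : H) with hbdef
  set a : ℕ → H := fun n => (E.orthogonalProjectionOnto ((A ^ n) x) : H) with hadef
  set G : ℕ → ℂ → H := fun n z => (z ^ (n + 1))⁻¹ • b n + z ^ n • a n with hGdef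
  -- locally uniform convergence of partial sums of G
  have hTLU : TendstoLocallyUniformlyOn
      (fun N : ℕ => fun z : ℂ => ∑ n ∈ Finset.range N, G n z)
      (fun z : ℂ => ∑' n : ℕ, G n z) atTop s := by
    rw [tendstoLocallyUniformlyOn_iff_forall_isCompact hs_open]
    intro K hKs hK
    rcases K.eq_empty_or_nonempty with rfl | hne
    · exact tendstoUniformlyOn_empty
    · obtain ⟨zmin, hzmin, hmin⟩ := hK.exists_isMinOn hne continuous_norm.continuousOn
      obtain ⟨zmax, hzmax, hmax⟩ := hK.exists_isMaxOn hne continuous_norm.continuousOn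
      have hminS := hKs hzmin
      have hmaxS := hKs hzmax
      have hρ0 : 0 < ‖zmin‖ := lt_of_le_of_lt hrm0 hminS.1
      have hsum1 : Summable (fun n : ℕ => ‖b n‖ * ‖zmin‖⁻¹ ^ (n + 1)) :=
        (part1 x zmin hminS.1 hminS.2).1
      have hsum2 : Summable (fun n : ℕ => ‖a n‖ * ‖zmax‖ ^ n) :=
        (part1 x zmax hmaxS.1 hmaxS.2).2
      refine tendstoUniformlyOn_tsum_nat (hsum1.add hsum2) ?_
      intro n z hz
      have hz1 : ‖zmin‖ ≤ ‖z‖ := hmin hz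
      have hz2 : ‖z‖ ≤ ‖zmax‖ := hmax hz
      have hz0 : 0 < ‖z‖ := hρ0.trans_le hz1
      calc ‖G n z‖ ≤ ‖(z ^ (n + 1))⁻¹ • b n‖ + ‖z ^ n • a n‖ := norm_add_le _ _
        _ = ‖z‖⁻¹ ^ (n + 1) * ‖b n‖ + ‖z‖ ^ n * ‖a n‖ := by
            rw [norm_smul, norm_smul, norm_inv, norm_pow, norm_pow, inv_pow]
        _ ≤ ‖zmin‖⁻¹ ^ (n + 1) * ‖b n‖ + ‖zmax‖ ^ n * ‖a n‖ := by
            have hinv : ‖z‖⁻¹ ≤ ‖zmin‖⁻¹ := inv_anti₀ hρ0 hz1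
            gcongr
        _ = ‖b n‖ * ‖zmin‖⁻¹ ^ (n + 1) + ‖a n‖ * ‖zmax‖ ^ n := by ring
  -- each partial sum is differentiable on s
  have hF : ∀ N : ℕ, DifferentiableOn ℂ
      (fun z : ℂ => ∑ n ∈ Finset.range N, G n z) s := by
    intro N
    apply DifferentiableOn.fun_sum
    intro n _
    have hz_ne : ∀ z ∈ s, z ^ (n + 1) ≠ 0 := by
      intro z hz
      apply pow_ne_zero
      intro h0
      rw [h0] at hz
      simp only [hsdef, Set.mem_setOf_eq, norm_zero] at hz
      exact absurd hz.1 (not_lt.mpr hrm0)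
    have h1 : DifferentiableOn ℂ (fun z : ℂ => (z ^ (n + 1))⁻¹ • b n) s :=
      (((differentiable_pow (n + 1)).differentiableOn).inv hz_ne).smul_const (b n)
    have h2 : DifferentiableOn ℂ (fun z : ℂ => z ^ n • a n) s :=
      ((differentiable_pow n).differentiableOn).smul_const (a n)
    exact h1.add h2
  have hg : DifferentiableOn ℂ (fun z : ℂ => ∑' n : ℕ, G n z) s :=
    hTLU.differentiableOn (Eventually.of_forall hF) hs_open
  refine hg.congr ?_
  intro z hz
  have hsum := part1 x z hz.1 hz.2
  have hs1 : Summable (fun n : ℕ => (z ^ (n + 1))⁻¹ • b n) := by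
    apply Summable.of_norm
    refine hsum.1.congr fun n => ?_
    rw [norm_smul, norm_inv, norm_pow, inv_pow, mul_comm]
  have hs2 : Summable (fun n : ℕ => z ^ n • a n) := by
    apply Summable.of_norm
    refine hsum.2.congr fun n => ?_
    rw [norm_smul, norm_pow, mul_comm]
  exact (hs1.tsum_add hs2).symm
end

section
/- Suppose T is a left-invertible bounded operator on a complex Hilbert space H with Cauchy dual T', and E is a closed subspace of H satisfying condition (LI). Assume there exists z ∈ ℂ, z ≠ 0, such that for every x ∈ H the series Σ_{n≥1} ‖P_E T^n x‖ |z|^{-n} and Σ_{n≥0} ‖P_E (T'*)^n x‖ |z|^n both converge. Then the point spectrum of T is empty: T has no eigenvalues. -/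
open ContinuousLinearMap

/-- Let `T` be a left-invertible bounded operator on a complex Hilbert
space `H` (i.e. `T*T` invertible, with inverse `B`), with Cauchy dual `T' = T * B`, and
let `E` be a closed subspace satisfying condition (LI).  If there is `z ≠ 0` such that
for every `x` the two series of the analytic model converge absolutely at `z`, then the
point spectrum of `T` is empty: `T` has no eigenvalues. -/
theorem point_spectrum_empty
    {H : Type*} [NormedAddCommGroup H] [InnerProductSpace ℂ H] [CompleteSpace H]
    (T B : H →L[ℂ] H)
    (hB1 : ContinuousLinearMap.adjoint T * T * B = 1)
    (hB2 : B * (ContinuousLinearMap.adjoint T * T) = 1)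
    (E : Submodule ℂ H) (hEclosed : IsClosed (E : Set H)) [E.HasOrthogonalProjection]
    (hLI : (Submodule.span ℂ {y : H | ∃ e ∈ E, ∃ n : ℕ,
        y = (ContinuousLinearMap.adjoint T ^ n) e ∨ y = ((T * B) ^ n) e}).topologicalClosure = ⊤)
    (hconv : ∃ z : ℂ, z ≠ 0 ∧ ∀ x : H,
      Summable (fun n : ℕ =>
        ‖(E.orthogonalProjectionOnto ((T ^ (n + 1)) x) : H)‖ * ‖z‖⁻¹ ^ (n + 1)) ∧
      Summable (fun n : ℕ =>
        ‖(E.orthogonalProjectionOnto ((ContinuousLinearMap.adjoint (T * B) ^ n) x) : H)‖ * ‖z‖ ^ n)) :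
    ∀ (μ : ℂ) (x : H), T x = μ • x → x = 0 := by
  intro μ x hx
  obtain ⟨z, hz, hsum⟩ := hconv
  -- case μ = 0 : T is injective
  by_cases hμ : μ = 0
  · have h0 : T x = 0 := by rw [hx, hμ, zero_smul]
    have : (B * (ContinuousLinearMap.adjoint T * T)) x = x := by rw [hB2]; rfl
    calc x = B (ContinuousLinearMap.adjoint T (T x)) := this.symm
    _ = 0 := by rw [h0, map_zero, map_zero]
  -- B is self-adjoint
  have hBadj : ContinuousLinearMap.adjoint B = B := by
    have h1 : ContinuousLinearMap.adjoint B * (ContinuousLinearMap.adjoint T * T) = 1 := by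
      have := congrArg star hB1
      simpa [← star_eq_adjoint, star_mul, mul_assoc] using this
    have h2 : ContinuousLinearMap.adjoint B * ((ContinuousLinearMap.adjoint T * T) * B) = B := by
      rw [← mul_assoc, h1, one_mul]
    rw [hB1, mul_one] at h2
    exact h2
  -- powers of T on x
  have hTn : ∀ n : ℕ, (T ^ n) x = μ ^ n • x := by
    intro n
    induction n with
    | zero => simp
    | succ n ih =>
      have e : (T ^ (n + 1)) x = T ((T ^ n) x) := by
        rw [pow_succ']; rfl
      rw [e, ih, map_smul, hx, smul_smul, pow_succ, mul_comm]
  -- adjoint of the Cauchy dual on x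
  have hdual : ContinuousLinearMap.adjoint (T * B) x = μ⁻¹ • x := by
    have hcomp : ContinuousLinearMap.adjoint (T * B)
        = B * ContinuousLinearMap.adjoint T := by
      rw [← star_eq_adjoint, star_mul, star_eq_adjoint, star_eq_adjoint, hBadj]
    have hx2 : B (ContinuousLinearMap.adjoint T (T x)) = x := by
      have : (B * (ContinuousLinearMap.adjoint T * T)) x = x := by rw [hB2]; rfl
      exact this
    have : μ • B (ContinuousLinearMap.adjoint T x) = x := by
      have := hx2
      rw [hx, map_smul, map_smul] at this
      exact this
    rw [hcomp]
    show B (ContinuousLinearMap.adjoint T x) = μ⁻¹ • x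
    calc B (ContinuousLinearMap.adjoint T x)
        = μ⁻¹ • (μ • B (ContinuousLinearMap.adjoint T x)) := by
          rw [smul_smul, inv_mul_cancel₀ hμ, one_smul]
      _ = μ⁻¹ • x := by rw [this]
  have hdualn : ∀ n : ℕ, (ContinuousLinearMap.adjoint (T * B) ^ n) x = (μ⁻¹) ^ n • x := by
    intro n
    induction n with
    | zero => simp
    | succ n ih =>
      have : (ContinuousLinearMap.adjoint (T * B) ^ (n + 1)) x
          = ContinuousLinearMap.adjoint (T * B) ((ContinuousLinearMap.adjoint (T * B) ^ n) x) := by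
        rw [pow_succ']; rfl
      rw [this, ih, map_smul, hdual, smul_smul, pow_succ, mul_comm]
  -- the projection of x on E vanishes
  have hz' : ‖z‖ ≠ 0 := norm_ne_zero_iff.mpr hz
  have hμ' : ‖μ‖ ≠ 0 := norm_ne_zero_iff.mpr hμ
  have hPE : (E.orthogonalProjectionOnto x : H) = 0 := by
    by_contra hP
    have hp : (0:ℝ) < ‖(E.orthogonalProjectionOnto x : H)‖ := norm_pos_iff.mpr hP
    obtain ⟨hs1, hs2⟩ := hsum x
    -- first series
    have h1 : ‖μ‖ * ‖z‖⁻¹ < 1 := by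
      have e1 : (fun n : ℕ => ‖(E.orthogonalProjectionOnto ((T ^ (n + 1)) x) : H)‖ * ‖z‖⁻¹ ^ (n + 1))
          = fun n : ℕ => ‖(E.orthogonalProjectionOnto x : H)‖ * (‖μ‖ * ‖z‖⁻¹) ^ (n + 1) := by
        funext n
        rw [hTn (n + 1)]
        have : (E.orthogonalProjectionOnto (μ ^ (n + 1) • x) : H)
            = μ ^ (n + 1) • (E.orthogonalProjectionOnto x : H) := by
          rw [map_smul]; rfl
        rw [this, norm_smul, norm_pow, mul_pow]
        push_cast
        ring
      rw [e1] at hs1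
      have hs1' : Summable (fun n : ℕ => (‖μ‖ * ‖z‖⁻¹) ^ (n + 1)) := by
        have := hs1.mul_left (‖(E.orthogonalProjectionOnto x : H)‖)⁻¹
        simpa [← mul_assoc, inv_mul_cancel₀ (show ‖E.starProjection x‖ ≠ 0 by simpa using hp.ne')] using this
      have hs1'' : Summable (fun n : ℕ => (‖μ‖ * ‖z‖⁻¹) ^ n) :=
        (summable_nat_add_iff 1).mp hs1'
      have := summable_geometric_iff_norm_lt_one.mp hs1''
      rwa [Real.norm_eq_abs, abs_of_nonneg (by positivity)] at this
    -- second series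
    have h2 : ‖μ‖⁻¹ * ‖z‖ < 1 := by
      have e2 : (fun n : ℕ =>
            ‖(E.orthogonalProjectionOnto ((ContinuousLinearMap.adjoint (T * B) ^ n) x) : H)‖ * ‖z‖ ^ n)
          = fun n : ℕ => ‖(E.orthogonalProjectionOnto x : H)‖ * (‖μ‖⁻¹ * ‖z‖) ^ n := by
        funext n
        rw [hdualn n]
        have : (E.orthogonalProjectionOnto ((μ⁻¹) ^ n • x) : H)
            = (μ⁻¹) ^ n • (E.orthogonalProjectionOnto x : H) := by
          rw [map_smul]; rfl
        rw [this, norm_smul, norm_pow, mul_pow, norm_inv]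
        ring
      rw [e2] at hs2
      have hs2' : Summable (fun n : ℕ => (‖μ‖⁻¹ * ‖z‖) ^ n) := by
        have := hs2.mul_left (‖(E.orthogonalProjectionOnto x : H)‖)⁻¹
        simpa [← mul_assoc, inv_mul_cancel₀ (show ‖E.starProjection x‖ ≠ 0 by simpa using hp.ne')] using this
      have := summable_geometric_iff_norm_lt_one.mp hs2'
      rwa [Real.norm_eq_abs, abs_of_nonneg (by positivity)] at this
    -- contradiction
    have hzpos : (0:ℝ) < ‖z‖ := lt_of_le_of_ne (norm_nonneg z) (Ne.symm hz')
    have hμpos : (0:ℝ) < ‖μ‖ := lt_of_le_of_ne (norm_nonneg μ) (Ne.symm hμ')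
    have hlt1 : ‖μ‖ < ‖z‖ := by
      rw [← div_eq_mul_inv] at h1
      exact (div_lt_one hzpos).mp h1
    have hlt2 : ‖z‖ < ‖μ‖ := by
      rw [mul_comm, ← div_eq_mul_inv] at h2
      exact (div_lt_one hμpos).mp h2
    exact absurd (hlt1.trans hlt2) (lt_irrefl _)
  -- x is orthogonal to E
  have hxE : x ∈ Eᗮ := Submodule.orthogonalProjectionOnto_eq_zero_iff.mp (by
    ext; simpa using congrArg id hPE)
  have hxe : ∀ e ∈ E, (inner ℂ x e : ℂ) = 0 :=
    (Submodule.mem_orthogonal' E x).mp hxE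
  -- x is orthogonal to the spanning set, hence to the dense span, hence x = 0
  have hker : (Submodule.span ℂ {y : H | ∃ e ∈ E, ∃ n : ℕ,
      y = (ContinuousLinearMap.adjoint T ^ n) e ∨ y = ((T * B) ^ n) e})
      ≤ LinearMap.ker ((innerSL ℂ x : H →L[ℂ] ℂ) : H →ₗ[ℂ] ℂ) := by
    rw [Submodule.span_le]
    rintro y ⟨e, he, n, hy | hy⟩ <;> subst hy <;>
      simp only [SetLike.mem_coe, LinearMap.mem_ker, ContinuousLinearMap.coe_coe, innerSL_apply_apply]
    · have : (inner ℂ x ((ContinuousLinearMap.adjoint T ^ n) e) : ℂ)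
          = inner ℂ ((T ^ n) x) e := by
        rw [show (ContinuousLinearMap.adjoint T) ^ n
            = ContinuousLinearMap.adjoint (T ^ n) by
          rw [← star_eq_adjoint, ← star_eq_adjoint, star_pow]]
        exact (ContinuousLinearMap.adjoint_inner_right (T ^ n) x e)
      rw [this, hTn n, inner_smul_left, hxe e he, mul_zero]
    · have : (inner ℂ x (((T * B) ^ n) e) : ℂ)
          = inner ℂ ((ContinuousLinearMap.adjoint (T * B) ^ n) x) e := by
        rw [show (ContinuousLinearMap.adjoint (T * B)) ^ n
            = ContinuousLinearMap.adjoint ((T * B) ^ n) by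
          rw [← star_eq_adjoint, ← star_eq_adjoint, star_pow]]
        exact (ContinuousLinearMap.adjoint_inner_left ((T * B) ^ n) e x).symm
      rw [this, hdualn n, inner_smul_left, hxe e he, mul_zero]
  have hclosed : IsClosed ((LinearMap.ker ((innerSL ℂ x : H →L[ℂ] ℂ) : H →ₗ[ℂ] ℂ) : Submodule ℂ H) : Set H) :=
    ContinuousLinearMap.isClosed_ker (innerSL ℂ x : H →L[ℂ] ℂ)
  have htop : (⊤ : Submodule ℂ H) ≤ LinearMap.ker ((innerSL ℂ x : H →L[ℂ] ℂ) : H →ₗ[ℂ] ℂ) := by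
    rw [← hLI]
    exact Submodule.topologicalClosure_minimal _ hker hclosed
  have : (inner ℂ x x : ℂ) = 0 := htop (Submodule.mem_top)
  exact inner_self_eq_zero.mp this
end

section
/- Let T be a left-invertible bounded operator on a complex Hilbert space H with Cauchy dual T', let e ∈ H and λ ∈ ℂ, λ ≠ 0, and assume the series Σ_{n≥1} ‖T*^n e‖ |λ|^{-n} and Σ_{n≥0} ‖T'^n e‖ |λ|^n converge. Then the vector w := Σ_{n≥1} λ^{-n} T*^n e + Σ_{n≥0} λ^n T'^n e satisfies T* w = λ w. Moreover, if E is a closed subspace of H satisfying condition (prep), e ∈ E and e ≠ 0, then w ≠ 0, so λ is an eigenvalue of T*. -/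
open ContinuousLinearMap
open scoped ComplexInnerProductSpace

/-- Let `T` be a left-invertible bounded operator on a complex Hilbert
space `H` (i.e. `T*T` invertible, with inverse `B`), with Cauchy dual `T' = T * B`, let
`λ ≠ 0` and `e ∈ H`, and assume the series `Σ_{n≥1} ‖T*^n e‖ |λ|^{-n}` and
`Σ_{n≥0} ‖T'^n e‖ |λ|^n` converge.  Then
`w := Σ_{n≥1} λ^{-n} T*^n e + Σ_{n≥0} λ^n T'^n e` satisfies `T* w = λ w`.
Moreover, if `E` is a closed subspace satisfying condition (prep), `e ∈ E` and `e ≠ 0`,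
then `w ≠ 0`, so `λ` is an eigenvalue of `T*`. -/
theorem adjoint_eigenvector_from_model
    {H : Type*} [NormedAddCommGroup H] [InnerProductSpace ℂ H] [CompleteSpace H]
    (T B : H →L[ℂ] H)
    (hB1 : ContinuousLinearMap.adjoint T * T * B = 1)
    (hB2 : B * (ContinuousLinearMap.adjoint T * T) = 1)
    (lam : ℂ) (hlam : lam ≠ 0) (e : H)
    (h1 : Summable (fun n : ℕ =>
      ‖(ContinuousLinearMap.adjoint T ^ (n + 1)) e‖ * ‖lam‖⁻¹ ^ (n + 1)))
    (h2 : Summable (fun n : ℕ => ‖((T * B) ^ n) e‖ * ‖lam‖ ^ n))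
    (w : H)
    (hw : w = (∑' n : ℕ, (lam ^ (n + 1))⁻¹ • (ContinuousLinearMap.adjoint T ^ (n + 1)) e) +
        ∑' n : ℕ, lam ^ n • ((T * B) ^ n) e) :
    ContinuousLinearMap.adjoint T w = lam • w ∧
    ∀ E : Submodule ℂ H, IsClosed (E : Set H) →
      (∀ f ∈ E, ∀ g ∈ E, ∀ n : ℕ, 1 ≤ n →
        ⟪f, (T ^ n) g⟫ = 0 ∧ ⟪f, ((T * B) ^ n) g⟫ = 0) →
      e ∈ E → e ≠ 0 → w ≠ 0 := by
  set A := ContinuousLinearMap.adjoint T with hA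
  set S := T * B with hS
  set a : ℕ → H := fun n => (lam ^ (n + 1))⁻¹ • (A ^ (n + 1)) e with ha
  set b : ℕ → H := fun n => lam ^ n • (S ^ n) e with hb
  -- A * S = 1
  have hAS1 : A * S = 1 := by rw [hS, hA, ← mul_assoc]; exact hB1
  have hAS : ∀ n : ℕ, ∀ x : H, A ((S ^ (n + 1)) x) = (S ^ n) x := by
    intro n x
    have h : A * S ^ (n + 1) = S ^ n := by
      rw [pow_succ', ← mul_assoc, hAS1, one_mul]
    calc A ((S ^ (n + 1)) x) = (A * S ^ (n + 1)) x := by rw [ContinuousLinearMap.mul_apply]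
    _ = (S ^ n) x := by rw [h]
  have hpow : ∀ (m : ℕ) (x y : H), ⟪x, (A ^ m) y⟫ = ⟪(T ^ m) x, y⟫ := by
    intro m
    induction m with
    | zero => intro x y; simp
    | succ k ih =>
      intro x y
      rw [pow_succ, ContinuousLinearMap.mul_apply, ih, hA, ContinuousLinearMap.adjoint_inner_right,
        ← ContinuousLinearMap.mul_apply, ← pow_succ']
  have hsa : Summable a := by
    apply Summable.of_norm
    apply h1.congr
    intro n
    simp [ha, norm_smul, norm_inv, norm_pow, inv_pow, mul_comm]
  have hsb : Summable b := by
    apply Summable.of_norm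
    apply h2.congr
    intro n
    simp [hb, norm_smul, norm_pow, mul_comm]
  have hsAb : Summable (fun n => A (b n)) := hsb.map A A.continuous
  have hsla : Summable (fun n => lam • a n) := hsa.const_smul lam
  -- key1 : ∑' lam • a = A e + ∑' A ∘ a
  have key1 : ∑' n, lam • a n = A e + ∑' n, A (a n) := by
    rw [Summable.tsum_eq_zero_add hsla]
    congr 1
    · simp only [ha]
      rw [pow_one, pow_one, smul_smul, mul_inv_cancel₀ hlam, one_smul]
    · apply tsum_congr
      intro n
      simp only [ha]
      rw [map_smul, smul_smul]
      congr 1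
      · rw [pow_succ, mul_inv_rev, ← mul_assoc, mul_inv_cancel₀ hlam, one_mul]
      · rw [← ContinuousLinearMap.mul_apply, ← pow_succ']
  -- key2 : ∑' A ∘ b = A e + ∑' lam • b
  have key2 : ∑' n, A (b n) = A e + ∑' n, lam • b n := by
    rw [Summable.tsum_eq_zero_add hsAb]
    congr 1
    · simp [hb]
    · apply tsum_congr
      intro n
      simp only [hb]
      rw [map_smul, hAS n e, smul_smul, ← pow_succ']
  have part1 : A w = lam • w := by
    rw [hw, map_add, A.map_tsum hsa, A.map_tsum hsb, smul_add,
      ← (hsa.hasSum.const_smul lam).tsum_eq, ← (hsb.hasSum.const_smul lam).tsum_eq,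
      key1, key2]
    abel
  refine ⟨part1, ?_⟩
  intro E _hcl hprep heE hne hw0
  apply hne
  have hinner : ⟪e, w⟫ = ⟪e, e⟫ := by
    rw [hw, inner_add_right]
    have ht1 : ⟪e, ∑' n, a n⟫ = ∑' n, ⟪e, a n⟫ := by
      simpa using (innerSL ℂ e).map_tsum hsa
    have ht2 : ⟪e, ∑' n, b n⟫ = ∑' n, ⟪e, b n⟫ := by
      simpa using (innerSL ℂ e).map_tsum hsb
    rw [ht1, ht2]
    have hz1 : ∀ n : ℕ, ⟪e, a n⟫ = 0 := by
      intro n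
      simp only [ha]
      rw [inner_smul_right, hpow]
      have h0 : ⟪e, (T ^ (n + 1)) e⟫ = 0 :=
        (hprep e heE e heE (n + 1) (Nat.le_add_left 1 n)).1
      rw [← inner_conj_symm, h0, map_zero, mul_zero]
    have hz2 : ∀ n : ℕ, n ≠ 0 → ⟪e, b n⟫ = 0 := by
      intro n hn
      simp only [hb]
      rw [inner_smul_right, (hprep e heE e heE n (Nat.one_le_iff_ne_zero.mpr hn)).2, mul_zero]
    rw [tsum_eq_single 0 hz2]
    have : ∑' n, ⟪e, a n⟫ = 0 := by
      rw [tsum_congr hz1]; exact tsum_zero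
    rw [this, zero_add]
    simp [hb]
  rw [hw0] at hinner
  rw [inner_zero_right] at hinner
  exact inner_self_eq_zero.mp hinner.symm
end
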